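/- Let {X(t)}_{t≥0} be a fractional Brownian motion of Hurst parameter h ∈ (0,1) and let a(t) = ∫_t^{t+1} X(s) ds. Then with probability one, a'(t) = O(√(log t)) and X(t) − a(t) = O(√(log t)) as t → ∞. -/

import Mathlib

open MeasureTheory Set Filter ProbabilityTheory
open scoped ENNReal NNReal

section aux
open Real


lemma my_absSet_meas (x : ℝ) : MeasurableSet {y : ℝ | x ≤ |y|} :=
  measurableSet_le measurable_const measurable_abs

/-- Gaussian tail bound with a lazy constant. -/
lemma my_gauss_tail (v : NNReal) (x : ℝ) (hx : 0 < x) :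
    gaussianReal 0 v {y : ℝ | x ≤ |y|} ≤ ENNReal.ofReal (3 * Real.exp (-(x^2) / (4*v))) := by
  by_cases hv : v = 0
  · subst hv
    rw [gaussianReal_zero_var, Measure.dirac_apply' _ (my_absSet_meas x)]
    have : (0:ℝ) ∉ {y : ℝ | x ≤ |y|} := by simp; linarith
    rw [Set.indicator_of_notMem this]
    positivity
  · have hv' : (0:ℝ) < (v:ℝ) := by positivity
    rw [gaussianReal_apply 0 hv _]
    have hpt : ∀ y ∈ {y : ℝ | x ≤ |y|}, gaussianPDF 0 v y ≤
        ENNReal.ofReal (Real.exp (-(x^2)/(4*v)) * ((Real.sqrt (2*Real.pi*v))⁻¹ *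
          Real.exp (-(4*(v:ℝ))⁻¹ * y^2))) := by
      intro y hy
      have hy' : x ≤ |y| := hy
      have hxy : x^2 ≤ y^2 := by
        nlinarith [abs_nonneg y, sq_abs y]
      rw [gaussianPDF]
      apply ENNReal.ofReal_le_ofReal
      rw [gaussianPDFReal]
      rw [show Real.exp (-(x^2)/(4*(v:ℝ))) * ((Real.sqrt (2*Real.pi*v))⁻¹ *
          Real.exp (-(4*(v:ℝ))⁻¹ * y^2)) = (Real.sqrt (2*Real.pi*v))⁻¹ *
          (Real.exp (-(x^2)/(4*(v:ℝ))) * Real.exp (-(4*(v:ℝ))⁻¹ * y^2)) from by ring]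
      apply mul_le_mul_of_nonneg_left _ (by positivity)
      rw [← Real.exp_add]
      apply Real.exp_le_exp.2
      have ht : (0:ℝ) ≤ (4*(v:ℝ))⁻¹ := by positivity
      have hA : -(y-0)^2/(2*(v:ℝ)) = (-(2*y^2)) * (4*(v:ℝ))⁻¹ := by
        field_simp; ring
      have hB : -(x^2)/(4*(v:ℝ)) = (-(x^2)) * (4*(v:ℝ))⁻¹ := by
        rw [div_eq_mul_inv]
      have hC : -(4*(v:ℝ))⁻¹ * y^2 = (-(y^2)) * (4*(v:ℝ))⁻¹ := by ring
      rw [hA, hB, hC]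
      nlinarith [mul_nonneg (sub_nonneg.2 hxy) ht]
    calc ∫⁻ y in {y : ℝ | x ≤ |y|}, gaussianPDF 0 v y
        ≤ ∫⁻ y in {y : ℝ | x ≤ |y|}, ENNReal.ofReal (Real.exp (-(x^2)/(4*v)) *
            ((Real.sqrt (2*Real.pi*v))⁻¹ * Real.exp (-(4*(v:ℝ))⁻¹ * y^2))) :=
          setLIntegral_mono (by fun_prop) hpt
      _ ≤ ∫⁻ y, ENNReal.ofReal (Real.exp (-(x^2)/(4*v)) *
            ((Real.sqrt (2*Real.pi*v))⁻¹ * Real.exp (-(4*(v:ℝ))⁻¹ * y^2))) :=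
          setLIntegral_le_lintegral _ _
      _ = ENNReal.ofReal (Real.exp (-(x^2)/(4*v)) * ((Real.sqrt (2*Real.pi*v))⁻¹ *
            ∫ y, Real.exp (-(4*(v:ℝ))⁻¹ * y^2))) := by
          rw [← ofReal_integral_eq_lintegral_ofReal]
          · congr 1
            rw [integral_const_mul, integral_const_mul]
          · exact ((integrable_exp_neg_mul_sq (by positivity)).const_mul _).const_mul _
          · filter_upwards with y
            positivity
      _ ≤ ENNReal.ofReal (3 * Real.exp (-(x^2) / (4*v))) := by
          apply ENNReal.ofReal_le_ofReal
          rw [integral_gaussian]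
          have hs : (0:ℝ) < Real.sqrt (2*Real.pi*v) := by positivity
          have h9 : Real.pi / (4*(v:ℝ))⁻¹ = 2*(2*Real.pi*v) := by field_simp [Real.pi_nonneg]; ring
          rw [h9, Real.sqrt_mul (by norm_num : (0:ℝ) ≤ 2) (2*Real.pi*(v:ℝ))]
          have key : (Real.sqrt (2*Real.pi*(v:ℝ)))⁻¹ * (Real.sqrt 2 * Real.sqrt (2*Real.pi*v)) ≤ 3 := by
            rw [mul_comm (Real.sqrt 2), ← mul_assoc, inv_mul_cancel₀ (ne_of_gt hs), one_mul]
            nlinarith [Real.sq_sqrt (by norm_num : (0:ℝ) ≤ 2), Real.sqrt_nonneg 2]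
          calc Real.exp (-(x^2)/(4*(v:ℝ))) * ((Real.sqrt (2*Real.pi*v))⁻¹ *
                (Real.sqrt 2 * Real.sqrt (2*Real.pi*v)))
              ≤ Real.exp (-(x^2)/(4*(v:ℝ))) * 3 :=
                mul_le_mul_of_nonneg_left key (Real.exp_nonneg _)
            _ = 3 * Real.exp (-(x^2) / (4*v)) := by ring

end aux

/-- Covariance function of fractional Brownian motion with Hurst parameter `h`. -/
noncomputable def fbmCov (h s t : ℝ) : ℝ :=
  (1 / 2) * (t ^ (2 * h) + s ^ (2 * h) - |t - s| ^ (2 * h))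

section aux
open Real

section incr
variable {Ω : Type*} [MeasurableSpace Ω] (P : Measure Ω) [IsProbabilityMeasure P]
    (h : ℝ) (X : Ω → ℝ → ℝ)

lemma my_incr_map (hh : 0 < h)
    (hgauss : ∀ (n : ℕ) (t : Fin n → ℝ), (∀ i, 0 ≤ t i) → ∀ c : Fin n → ℝ,
      Measure.map (fun ω => ∑ i, c i * X ω (t i)) P =
        gaussianReal 0 (∑ i, ∑ j, c i * c j * fbmCov h (t i) (t j)).toNNReal)
    (s t : ℝ) (hs : 0 ≤ s) (ht : 0 ≤ t) :
    Measure.map (fun ω => X ω t - X ω s) P = gaussianReal 0 (|t - s| ^ (2*h)).toNNReal := by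
  have h2h : 2 * h ≠ 0 := by positivity
  have := hgauss 2 ![s, t] (by intro i; fin_cases i <;> simpa) ![-1, 1]
  have hfun : (fun ω => ∑ i : Fin 2, (![-1, 1] : Fin 2 → ℝ) i * X ω ((![s, t] : Fin 2 → ℝ) i))
      = fun ω => X ω t - X ω s := by
    funext ω
    simp [Fin.sum_univ_two]
    ring
  rw [hfun] at this
  rw [this]
  congr 1
  rw [Fin.sum_univ_two, Fin.sum_univ_two, Fin.sum_univ_two]
  simp only [Matrix.cons_val_zero, Matrix.cons_val_one, Matrix.head_cons]
  unfold fbmCov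
  rw [sub_self s, sub_self t, abs_zero, Real.zero_rpow h2h]
  rw [abs_sub_comm s t]
  ring

lemma my_incr_tail (hh : 0 < h)
    (hmeas : ∀ t : ℝ, Measurable fun ω => X ω t)
    (hgauss : ∀ (n : ℕ) (t : Fin n → ℝ), (∀ i, 0 ≤ t i) → ∀ c : Fin n → ℝ,
      Measure.map (fun ω => ∑ i, c i * X ω (t i)) P =
        gaussianReal 0 (∑ i, ∑ j, c i * c j * fbmCov h (t i) (t j)).toNNReal)
    (s t : ℝ) (hs : 0 ≤ s) (ht : 0 ≤ t) (x : ℝ) (hx : 0 < x) :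
    P {ω | x ≤ |X ω t - X ω s|} ≤
      ENNReal.ofReal (3 * Real.exp (-(x^2) / (4 * |t - s| ^ (2*h)))) := by
  have hf : Measurable (fun ω => X ω t - X ω s) := (hmeas t).sub (hmeas s)
  have hset : {ω | x ≤ |X ω t - X ω s|} = (fun ω => X ω t - X ω s) ⁻¹' {y : ℝ | x ≤ |y|} := rfl
  rw [hset, ← Measure.map_apply hf (my_absSet_meas x),
    my_incr_map P h X hh hgauss s t hs ht]
  have hco : ((((|t - s| ^ (2*h)).toNNReal) : NNReal) : ℝ) = |t - s| ^ (2*h) :=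
    Real.coe_toNNReal _ (Real.rpow_nonneg (abs_nonneg _) _)
  calc gaussianReal 0 (|t - s| ^ (2*h)).toNNReal {y : ℝ | x ≤ |y|}
      ≤ ENNReal.ofReal (3 * Real.exp (-(x^2) / (4 * ((|t - s| ^ (2*h)).toNNReal : ℝ)))) :=
        my_gauss_tail _ x hx
    _ = ENNReal.ofReal (3 * Real.exp (-(x^2) / (4 * |t - s| ^ (2*h)))) := by rw [hco]

end incr



lemma my_chain (g : ℝ → ℝ) (a : ℝ)
    (hg : ContinuousOn g (Set.Icc a (a+2)))
    (x : ℕ → ℝ) (hx : ∀ k, 0 ≤ x k) (hsum : Summable x)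
    (hincr : ∀ k (j : ℕ), j < 2^(k+1) →
      |g (a + ((j:ℝ)+1)/2^k) - g (a + (j:ℝ)/2^k)| ≤ x k)
    (t : ℝ) (ht : t ∈ Set.Icc a (a+2)) :
    |g t - g a| ≤ 2 * ∑' k, x k := by
  obtain ⟨hta, hta2⟩ := ht
  set y := t - a with hy
  have hy0 : 0 ≤ y := by simp [hy]; linarith
  have hy2 : y ≤ 2 := by simp [hy]; linarith
  set u : ℕ → ℝ := fun k => a + (⌊y * 2^k⌋₊ : ℝ)/2^k with hu
  have hpow : ∀ k : ℕ, (0:ℝ) < 2^k := fun k => by positivity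
  have hfl : ∀ k, (⌊y * 2^k⌋₊ : ℝ) ≤ y * 2^k :=
    fun k => Nat.floor_le (by positivity)
  have hub : ∀ k, u k ≤ t := by
    intro k
    have h1 : (⌊y * 2^k⌋₊ : ℝ)/2^k ≤ y := by
      rw [div_le_iff₀ (hpow k)]; exact hfl k
    have h2 : t = a + y := by simp [hy]
    simp only [hu]
    linarith
  have hlb : ∀ k, a ≤ u k := by
    intro k
    simp only [hu]
    have : (0:ℝ) ≤ (⌊y * 2^k⌋₊ : ℝ)/2^k := by positivity
    linarith
  have hmem : ∀ k, u k ∈ Set.Icc a (a+2) := fun k => ⟨hlb k, le_trans (hub k) hta2⟩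
  -- key inductive bound
  have key : ∀ K, |g (u K) - g a| ≤ 2 * x 0 + ∑ k ∈ Finset.range K, x (k+1) := by
    intro K
    induction K with
    | zero =>
      simp only [Finset.range_zero, Finset.sum_empty, add_zero]
      have hm2 : ⌊y⌋₊ ≤ 2 := by
        have := Nat.floor_le_floor (R := ℝ) hy2
        simpa using this
      have hu0 : u 0 = a + (⌊y⌋₊ : ℕ) := by simp [hu]
      interval_cases hm : ⌊y⌋₊
      · rw [hu0]
        simp only [Nat.cast_zero, add_zero, sub_self, abs_zero]
        linarith [hx 0]
      · rw [hu0]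
        have := hincr 0 0 (by norm_num)
        norm_num at this ⊢
        linarith [hx 0]
      · rw [hu0]
        have h1 := hincr 0 0 (by norm_num)
        have h2 := hincr 0 1 (by norm_num)
        norm_num at h1 h2 ⊢
        calc |g (a+2) - g a| ≤ |g (a+2) - g (a+1)| + |g (a+1) - g a| := abs_sub_le _ _ _
          _ ≤ 2 * x 0 := by linarith
    | succ K ih =>
      have step : |g (u (K+1)) - g (u K)| ≤ x (K+1) := by
        set A := ⌊y * 2^K⌋₊ with hA
        set B := ⌊y * 2^(K+1)⌋₊ with hB
        have hAB1 : 2*A ≤ B := by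
          apply Nat.le_floor
          push_cast
          have hfK := hfl K
          have hr : y * 2^(K+1) = 2 * (y * 2^K) := by ring
          rw [← hA] at hfK
          linarith
        have hAB2 : B ≤ 2*A + 1 := by
          have h1 : y * 2^K < (A:ℝ) + 1 := Nat.lt_floor_add_one _
          have h2 : (B:ℝ) ≤ y * 2^(K+1) := hfl (K+1)
          have : (B:ℝ) < 2*(A:ℝ) + 2 := by
            calc (B:ℝ) ≤ y * 2^(K+1) := h2
              _ = 2 * (y * 2^K) := by ring
              _ < 2*(A:ℝ) + 2 := by linarith
          have := (by exact_mod_cast this : B < 2*A + 2)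
          omega
        obtain hBe | hBe : B = 2*A ∨ B = 2*A+1 := by omega
        · have : u (K+1) = u K := by
            simp only [hu, ← hA, ← hB, hBe]
            congr 1
            push_cast
            field_simp
            ring
          rw [this, sub_self, abs_zero]
          exact hx _
        · have h2A : 2*A < 2^(K+2) := by
            have h2 : (B:ℝ) ≤ y * 2^(K+1) := hfl (K+1)
            have : (B:ℝ) ≤ 2^(K+2) := by
              calc (B:ℝ) ≤ y * 2^(K+1) := h2
                _ ≤ 2 * 2^(K+1) := by nlinarith [hpow (K+1)]
                _ = 2^(K+2) := by ring
            have hBn : B ≤ 2^(K+2) := by exact_mod_cast this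
            omega
          have := hincr (K+1) (2*A) h2A
          have e1 : u (K+1) = a + (((2*A : ℕ):ℝ)+1)/2^(K+1) := by
            simp only [hu, ← hB, hBe]
            push_cast
            ring_nf
          have e2 : u K = a + ((2*A : ℕ):ℝ)/2^(K+1) := by
            simp only [hu, ← hA]
            congr 1
            push_cast
            field_simp
            ring
          rw [e1, e2]
          exact this
      calc |g (u (K+1)) - g a| ≤ |g (u (K+1)) - g (u K)| + |g (u K) - g a| := abs_sub_le _ _ _
        _ ≤ x (K+1) + (2 * x 0 + ∑ k ∈ Finset.range K, x (k+1)) := by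
            exact add_le_add step ih
        _ = 2 * x 0 + ∑ k ∈ Finset.range (K+1), x (k+1) := by
            rw [Finset.sum_range_succ]; ring
  -- uniform bound
  have hsum' : Summable (fun k => x (k+1)) := (summable_nat_add_iff 1).2 hsum
  have bound : ∀ K, |g (u K) - g a| ≤ 2 * ∑' k, x k := by
    intro K
    have h1 : ∑ k ∈ Finset.range K, x (k+1) ≤ ∑' k, x (k+1) :=
      Summable.sum_le_tsum _ (fun i _ => hx _) hsum'
    have h2 : (∑' k, x k) = x 0 + ∑' k, x (k+1) := Summable.tsum_eq_zero_add hsum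
    have h3 : 0 ≤ ∑' k, x (k+1) := tsum_nonneg (fun k => hx _)
    calc |g (u K) - g a| ≤ 2 * x 0 + ∑ k ∈ Finset.range K, x (k+1) := key K
      _ ≤ 2 * x 0 + ∑' k, x (k+1) := by linarith
      _ ≤ 2 * ∑' k, x k := by rw [h2]; linarith
  -- limit
  have hulim : Tendsto u atTop (nhds t) := by
    rw [tendsto_iff_dist_tendsto_zero]
    apply squeeze_zero (fun K => dist_nonneg) (g := fun K => (1/2:ℝ)^K)
    · intro K
      rw [Real.dist_eq]
      have hp : (0:ℝ) < 2^K := hpow K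
      have h1 : (⌊y * 2^K⌋₊ : ℝ) ≤ y * 2^K := hfl K
      have h2 : y * 2^K < (⌊y * 2^K⌋₊ : ℝ) + 1 := Nat.lt_floor_add_one _
      have ht' : t = a + y := by simp [hy]
      have key1 : (⌊y * 2^K⌋₊ : ℝ)/2^K ≤ y := by
        rw [div_le_iff₀ hp]; exact h1
      have key2 : y < (⌊y * 2^K⌋₊ : ℝ)/2^K + 1/2^K := by
        rw [← add_div, ← lt_div_iff₀ hp] at *
        linarith
      have e2 : (1/2:ℝ)^K = 1/2^K := by
        rw [one_div_pow]
      simp only [hu]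
      rw [ht', e2, abs_le]
      constructor
      · have : a + (⌊y * 2^K⌋₊ : ℝ)/2^K - (a + y) = (⌊y * 2^K⌋₊ : ℝ)/2^K - y := by ring
        rw [this]
        linarith
      · have : a + (⌊y * 2^K⌋₊ : ℝ)/2^K - (a + y) = (⌊y * 2^K⌋₊ : ℝ)/2^K - y := by ring
        rw [this]
        have h0 : (0:ℝ) < 1/2^K := by positivity
        linarith
    · exact tendsto_pow_atTop_nhds_zero_of_lt_one (by norm_num) (by norm_num)
  have hglim : Tendsto (fun K => g (u K)) atTop (nhds (g t)) := by
    apply (hg t ⟨hta, hta2⟩).tendsto.comp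
    exact tendsto_nhdsWithin_of_tendsto_nhds_of_eventually_within u hulim
      (Filter.Eventually.of_forall hmem)
  have habs : Tendsto (fun K => |g (u K) - g a|) atTop (nhds (|g t - g a|)) :=
    ((hglim.sub tendsto_const_nhds).abs)
  exact le_of_tendsto' habs bound



lemma my_sqrt_add_le (a b : ℝ) (ha : 0 ≤ a) (hb : 0 ≤ b) :
    Real.sqrt (a + b) ≤ Real.sqrt a + Real.sqrt b := by
  rw [show a + b = (Real.sqrt a)^2 + (Real.sqrt b)^2 by rw [Real.sq_sqrt ha, Real.sq_sqrt hb]]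
  calc Real.sqrt ((Real.sqrt a)^2 + (Real.sqrt b)^2)
      ≤ Real.sqrt ((Real.sqrt a + Real.sqrt b)^2) := by
        apply Real.sqrt_le_sqrt; nlinarith [Real.sqrt_nonneg a, Real.sqrt_nonneg b]
    _ = Real.sqrt a + Real.sqrt b := Real.sqrt_sq (by positivity)

lemma my_sqrt_le_one_add (a : ℝ) (ha : 0 ≤ a) : Real.sqrt a ≤ 1 + a := by
  calc Real.sqrt a ≤ Real.sqrt ((1 + a)^2) := by
        apply Real.sqrt_le_sqrt; nlinarith
    _ = 1 + a := Real.sqrt_sq (by linarith)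

noncomputable def myThr (h : ℝ) (N k : ℕ) : ℝ :=
  ((1:ℝ)/2^k)^h * Real.sqrt (8*Real.log 2*((k:ℝ)+2) + 8*Real.log ((N:ℝ)+2))

lemma myS_pos (N k : ℕ) : 0 < 8*Real.log 2*((k:ℝ)+2) + 8*Real.log ((N:ℝ)+2) := by
  have h1 : 0 < Real.log 2 := Real.log_pos (by norm_num)
  have h2 : (0:ℝ) ≤ Real.log ((N:ℝ)+2) := Real.log_nonneg (by
    have : (0:ℝ) ≤ (N:ℝ) := Nat.cast_nonneg N
    linarith)
  have h3 : (0:ℝ) < (k:ℝ)+2 := by positivity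
  nlinarith

lemma myThr_pos (h : ℝ) (N k : ℕ) : 0 < myThr h N k := by
  unfold myThr
  have h1 : (0:ℝ) < ((1:ℝ)/2^k)^h := Real.rpow_pos_of_pos (by positivity) h
  have h2 := myS_pos N k
  positivity

lemma my_pow_h_pow (b : ℝ) (hb : 0 ≤ b) (h : ℝ) (k : ℕ) : ((b^k : ℝ))^h = (b^h)^k := by
  rw [← Real.rpow_natCast b k, ← Real.rpow_natCast (b^h) k, ← Real.rpow_mul hb,
    ← Real.rpow_mul hb, mul_comm]

lemma myThr_eq (h : ℝ) (N k : ℕ) :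
    myThr h N k = ((1/2:ℝ)^h)^k * Real.sqrt (8*Real.log 2*((k:ℝ)+2) + 8*Real.log ((N:ℝ)+2)) := by
  unfold myThr
  rw [show (1:ℝ)/2^k = ((1/2:ℝ))^k by rw [one_div_pow], my_pow_h_pow _ (by norm_num)]

lemma myThr_sq (h : ℝ) (N k : ℕ) :
    (myThr h N k)^2 = ((1:ℝ)/2^k)^(2*h) * (8*Real.log 2*((k:ℝ)+2) + 8*Real.log ((N:ℝ)+2)) := by
  unfold myThr
  rw [mul_pow, Real.sq_sqrt (le_of_lt (myS_pos N k))]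
  congr 1
  rw [← Real.rpow_natCast (((1:ℝ)/2^k)^h) 2, ← Real.rpow_mul (by positivity)]
  norm_num
  rw [mul_comm h 2]

-- summability of the thresholds
lemma my_summable_thr (r : ℝ) (hr0 : 0 ≤ r) (hr1 : r < 1) (c : ℝ) (hc : 0 ≤ c) :
    Summable (fun k : ℕ => r^k * Real.sqrt (8*Real.log 2*((k:ℝ)+2) + c)) := by
  have hlog2 : Real.log 2 ≤ 1 := by
    have := Real.log_le_sub_one_of_pos (by norm_num : (0:ℝ) < 2)
    linarith
  have hlog2' : 0 < Real.log 2 := Real.log_pos (by norm_num)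
  apply Summable.of_nonneg_of_le (f := fun k : ℕ => (1 + 8*((k:ℝ)+2) + c) * r^k)
    (fun k => by positivity)
  · intro k
    have harg : (0:ℝ) ≤ 8*Real.log 2*((k:ℝ)+2) + c := by positivity
    have h1 : Real.sqrt (8*Real.log 2*((k:ℝ)+2) + c) ≤ 1 + (8*Real.log 2*((k:ℝ)+2) + c) :=
      my_sqrt_le_one_add _ harg
    have h2 : 8*Real.log 2*((k:ℝ)+2) ≤ 8*((k:ℝ)+2) := by nlinarith [hlog2, hlog2']
    have h3 : (0:ℝ) ≤ r^k := by positivity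
    nlinarith [h1, h2, h3, Real.sqrt_nonneg (8*Real.log 2*((k:ℝ)+2) + c)]
  · have hgeo : Summable (fun k : ℕ => r^k) := summable_geometric_of_lt_one hr0 hr1
    have hkgeo : Summable (fun k : ℕ => (k:ℝ) * r^k) := by
      have := summable_pow_mul_geometric_of_norm_lt_one 1 (r := r)
        (by rwa [Real.norm_eq_abs, abs_of_nonneg hr0])
      simpa using this
    have : (fun k : ℕ => (1 + 8*((k:ℝ)+2) + c) * r^k)
        = fun k : ℕ => 8*((k:ℝ) * r^k) + (17 + c) * r^k := by
      funext k; ring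
    rw [this]
    exact (hkgeo.mul_left 8).add (hgeo.mul_left _)

lemma my_tsum_thr_le (r : ℝ) (hr0 : 0 ≤ r) (hr1 : r < 1) (c : ℝ) (hc : 0 ≤ c) :
    ∑' k : ℕ, r^k * Real.sqrt (8*Real.log 2*((k:ℝ)+2) + c)
      ≤ (∑' k : ℕ, r^k * Real.sqrt (8*Real.log 2*((k:ℝ)+2))) + Real.sqrt c * (1-r)⁻¹ := by
  have hs1 := my_summable_thr r hr0 hr1 c hc
  have hs2 := my_summable_thr r hr0 hr1 0 le_rfl
  have hs2' : Summable (fun k : ℕ => r^k * Real.sqrt (8*Real.log 2*((k:ℝ)+2))) := by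
    simpa using hs2
  have hgeo : Summable (fun k : ℕ => r^k) := summable_geometric_of_lt_one hr0 hr1
  have hsum2 : Summable (fun k : ℕ => r^k * Real.sqrt (8*Real.log 2*((k:ℝ)+2)) + r^k * Real.sqrt c) :=
    hs2'.add (hgeo.mul_right _)
  calc ∑' k : ℕ, r^k * Real.sqrt (8*Real.log 2*((k:ℝ)+2) + c)
      ≤ ∑' k : ℕ, (r^k * Real.sqrt (8*Real.log 2*((k:ℝ)+2)) + r^k * Real.sqrt c) := by
        apply Summable.tsum_le_tsum _ hs1 hsum2
        intro k
        have h1 : Real.sqrt (8*Real.log 2*((k:ℝ)+2) + c)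
            ≤ Real.sqrt (8*Real.log 2*((k:ℝ)+2)) + Real.sqrt c := by
          apply my_sqrt_add_le _ _ _ hc
          have := myS_pos 0 k
          have h1 : 0 < Real.log 2 := Real.log_pos (by norm_num)
          nlinarith
        have h3 : (0:ℝ) ≤ r^k := by positivity
        nlinarith
    _ = (∑' k : ℕ, r^k * Real.sqrt (8*Real.log 2*((k:ℝ)+2)))
          + ∑' k : ℕ, r^k * Real.sqrt c := Summable.tsum_add hs2' (hgeo.mul_right _)
    _ = (∑' k : ℕ, r^k * Real.sqrt (8*Real.log 2*((k:ℝ)+2))) + Real.sqrt c * (1-r)⁻¹ := by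
        rw [tsum_mul_right, tsum_geometric_of_lt_one hr0 hr1, mul_comm]
        ring



lemma my_exp_calc (N k : ℕ) :
    (2:ℝ)^(k+1) * (3 * Real.exp (-(2*Real.log 2*((k:ℝ)+2) + 2*Real.log ((N:ℝ)+2))))
      ≤ (1/2:ℝ)^k * (1/((N:ℝ)+1))^2 := by
  have hN0 : (0:ℝ) ≤ (N:ℝ) := Nat.cast_nonneg N
  have hexp1 : Real.exp (2*Real.log 2*((k:ℝ)+2)) = (2:ℝ)^(2*k+4) := by
    have e : 2*Real.log 2*((k:ℝ)+2) = ((2*k+4 : ℕ):ℝ) * Real.log 2 := by push_cast; ring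
    rw [e, Real.exp_nat_mul, Real.exp_log (by norm_num)]
  have hexp2 : Real.exp (2*Real.log ((N:ℝ)+2)) = ((N:ℝ)+2)^2 := by
    have e : 2*Real.log ((N:ℝ)+2) = ((2 : ℕ):ℝ) * Real.log ((N:ℝ)+2) := by norm_num
    rw [e, Real.exp_nat_mul, Real.exp_log (by linarith)]
  rw [show -(2*Real.log 2*((k:ℝ)+2) + 2*Real.log ((N:ℝ)+2))
      = -(2*Real.log 2*((k:ℝ)+2)) + -(2*Real.log ((N:ℝ)+2)) by ring,
    Real.exp_add, Real.exp_neg, Real.exp_neg, hexp1, hexp2]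
  rw [one_div, inv_pow, one_div, inv_pow]
  have hN : (((N:ℝ)+2)^2)⁻¹ ≤ (((N:ℝ)+1)^2)⁻¹ := by
    apply inv_anti₀ (by positivity)
    nlinarith
  have hk : (2:ℝ)^(k+1) * 3 * ((2:ℝ)^(2*k+4))⁻¹ ≤ ((2:ℝ)^k)⁻¹ := by
    rw [show 2*k+4 = (k+1)+(k+3) by ring, pow_add (2:ℝ) (k+1) (k+3), mul_inv]
    rw [show (2:ℝ)^(k+1) * 3 * (((2:ℝ)^(k+1))⁻¹ * ((2:ℝ)^(k+3))⁻¹)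
        = 3 * ((2:ℝ)^(k+3))⁻¹ * ((2:ℝ)^(k+1) * ((2:ℝ)^(k+1))⁻¹) by ring,
      mul_inv_cancel₀ (by positivity), mul_one]
    rw [pow_add (2:ℝ) k 3, mul_inv]
    have h0 : (0:ℝ) ≤ ((2:ℝ)^k)⁻¹ := by positivity
    norm_num
    linarith
  calc (2:ℝ)^(k+1) * (3 * (((2:ℝ)^(2*k+4))⁻¹ * (((N:ℝ)+2)^2)⁻¹))
      = ((2:ℝ)^(k+1) * 3 * ((2:ℝ)^(2*k+4))⁻¹) * (((N:ℝ)+2)^2)⁻¹ := by ring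
    _ ≤ ((2:ℝ)^k)⁻¹ * (((N:ℝ)+1)^2)⁻¹ := by
        apply mul_le_mul hk hN (by positivity) (by positivity)

lemma my_tail_sum {Ω : Type*} [MeasurableSpace Ω] (P : Measure Ω) (A : ℕ×ℕ×ℕ → Set Ω)
    (hA : ∀ N k j : ℕ, P (A (N,k,j)) ≤ if j < 2^(k+1) then
      ENNReal.ofReal (3 * Real.exp (-(2*Real.log 2*((k:ℝ)+2) + 2*Real.log ((N:ℝ)+2)))) else 0) :
    ∑' i : ℕ×ℕ×ℕ, P (A i) ≠ ⊤ := by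
  set c : ℕ → ℕ → ℝ≥0∞ := fun N k =>
    ENNReal.ofReal (3 * Real.exp (-(2*Real.log 2*((k:ℝ)+2) + 2*Real.log ((N:ℝ)+2)))) with hc
  have step1 : ∑' i : ℕ×ℕ×ℕ, P (A i)
      ≤ ∑' i : ℕ×ℕ×ℕ, (if i.2.2 < 2^(i.2.1+1) then c i.1 i.2.1 else 0) := by
    apply ENNReal.tsum_le_tsum
    intro i
    exact hA i.1 i.2.1 i.2.2
  have hcount : ∀ (n : ℕ) (x : ℝ≥0∞), ∑' j : ℕ, (if j < n then x else 0) = n * x := by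
    intro n x
    rw [tsum_eq_sum (s := Finset.range n) (f := fun j : ℕ => if j < n then x else 0)
      (by intro j hj; simp only [Finset.mem_range] at hj; simp [hj])]
    rw [Finset.sum_ite_of_true (by intro j hj; exact Finset.mem_range.1 hj)]
    rw [Finset.sum_const, Finset.card_range, nsmul_eq_mul]
  have step2 : ∑' i : ℕ×ℕ×ℕ, (if i.2.2 < 2^(i.2.1+1) then c i.1 i.2.1 else 0)
      = ∑' N : ℕ, ∑' k : ℕ, ((2^(k+1) : ℕ) : ℝ≥0∞) * c N k := by
    rw [ENNReal.tsum_prod']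
    congr 1
    funext N
    rw [ENNReal.tsum_prod']
    congr 1
    funext k
    have e : (∑' (b : ℕ), if (N, k, b).2.2 < 2 ^ ((N, k, b).2.1 + 1)
        then c (N, k, b).1 (N, k, b).2.1 else 0)
        = ∑' (j : ℕ), if j < 2^(k+1) then c N k else 0 := rfl
    rw [e]
    exact hcount (2^(k+1)) (c N k)
  have step3 : ∀ N k : ℕ, ((2^(k+1) : ℕ) : ℝ≥0∞) * c N k
      ≤ ENNReal.ofReal ((1/2:ℝ)^k * (1/((N:ℝ)+1))^2) := by
    intro N k
    have e1 : ((2^(k+1) : ℕ) : ℝ≥0∞) = ENNReal.ofReal ((2:ℝ)^(k+1)) := by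
      rw [show ((2:ℝ))^(k+1) = (((2^(k+1) : ℕ)):ℝ) by push_cast; ring, ENNReal.ofReal_natCast]
    rw [e1, hc, ← ENNReal.ofReal_mul (by positivity)]
    exact ENNReal.ofReal_le_ofReal (my_exp_calc N k)
  have hsumN : Summable (fun N : ℕ => 2 * (1/((N:ℝ)+1))^2) := by
    have h1 : Summable (fun n : ℕ => 1 / ((n:ℝ))^2) := summable_one_div_nat_pow.2 (by norm_num)
    have h2 : Summable (fun N : ℕ => 1 / (((N:ℝ))+1)^2) := by
      have := (summable_nat_add_iff 1).2 h1
      apply this.congr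
      intro n
      push_cast
      ring
    apply Summable.mul_left
    apply h2.congr
    intro n
    rw [one_div, one_div, inv_pow]
  have step4 : ∀ N : ℕ, ∑' k : ℕ, ENNReal.ofReal ((1/2:ℝ)^k * (1/((N:ℝ)+1))^2)
      = ENNReal.ofReal (2 * (1/((N:ℝ)+1))^2) := by
    intro N
    rw [← ENNReal.ofReal_tsum_of_nonneg (fun k => by positivity)
      (((summable_geometric_of_lt_one (by norm_num : (0:ℝ) ≤ 1/2)
        (by norm_num : (1/2:ℝ) < 1))).mul_right _)]
    congr 1
    rw [tsum_mul_right, tsum_geometric_of_lt_one (by norm_num) (by norm_num)]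
    norm_num
  have step5 : ∑' N : ℕ, ENNReal.ofReal (2 * (1/((N:ℝ)+1))^2) ≠ ⊤ := by
    rw [← ENNReal.ofReal_tsum_of_nonneg (fun N => by positivity) hsumN]
    exact ENNReal.ofReal_ne_top
  have hle : ∑' N : ℕ, ∑' k : ℕ, ((2^(k+1) : ℕ) : ℝ≥0∞) * c N k
      ≤ ∑' N : ℕ, ENNReal.ofReal (2 * (1/((N:ℝ)+1))^2) := by
    calc ∑' N : ℕ, ∑' k : ℕ, ((2^(k+1) : ℕ) : ℝ≥0∞) * c N k
        ≤ ∑' N : ℕ, ∑' k : ℕ, ENNReal.ofReal ((1/2:ℝ)^k * (1/((N:ℝ)+1))^2) := by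
          apply ENNReal.tsum_le_tsum
          intro N
          exact ENNReal.tsum_le_tsum (step3 N)
      _ = ∑' N : ℕ, ENNReal.ofReal (2 * (1/((N:ℝ)+1))^2) := by
          congr 1; funext N; exact step4 N
  exact ne_top_of_le_ne_top step5 ((step1.trans_eq step2).trans hle)

end aux
set_option maxHeartbeats 2000000 in
/-- If `X` is a fractional Brownian motion of Hurst parameter `h ∈ (0,1)`
(centered Gaussian process with continuous paths, `X(0) = 0`, covariance
`E[X(t)X(s)] = (1/2)(t^{2h}+s^{2h}−|t−s|^{2h})`) and `a(t) = ∫_t^{t+1} X(s) ds`, then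
almost surely `a'(t) = X(t+1) − X(t) = O(√(log t))` and `X(t) − a(t) = O(√(log t))`
as `t → ∞`. -/
theorem stmt6 {Ω : Type*} [MeasurableSpace Ω] (P : Measure Ω) [IsProbabilityMeasure P]
    (h : ℝ) (hh : h ∈ Ioo (0:ℝ) 1) (X : Ω → ℝ → ℝ)
    (hmeas : ∀ t : ℝ, Measurable fun ω => X ω t)
    (hcont : ∀ ω : Ω, ContinuousOn (X ω) (Ici 0))
    (hzero : ∀ ω : Ω, X ω 0 = 0)
    (hgauss : ∀ (n : ℕ) (t : Fin n → ℝ), (∀ i, 0 ≤ t i) → ∀ c : Fin n → ℝ,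
      Measure.map (fun ω => ∑ i, c i * X ω (t i)) P =
        gaussianReal 0 (∑ i, ∑ j, c i * c j * fbmCov h (t i) (t j)).toNNReal) :
    ∀ᵐ ω ∂P,
      (∃ C T : ℝ, ∀ t ≥ T, |X ω (t + 1) - X ω t| ≤ C * Real.sqrt (Real.log t)) ∧
      (∃ C T : ℝ, ∀ t ≥ T,
        |X ω t - ∫ s in t..(t + 1), X ω s| ≤ C * Real.sqrt (Real.log t)) := by
  obtain ⟨hh0, hh1⟩ := hh
  set r : ℝ := (1/2:ℝ)^h with hrdef
  have hr0 : 0 < r := Real.rpow_pos_of_pos (by norm_num) h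
  have hr1 : r < 1 := Real.rpow_lt_one (by norm_num) (by norm_num) hh0
  set p : ℕ → ℕ → ℕ → ℝ := fun N k j => (N:ℝ) + (j:ℝ)/2^k with hpdef
  have hp0 : ∀ N k j, 0 ≤ p N k j := fun N k j => by
    have h1 : (0:ℝ) ≤ (N:ℝ) := Nat.cast_nonneg N
    have h2 : (0:ℝ) ≤ (j:ℝ)/2^k := by positivity
    simp only [hpdef]; linarith
  set A : ℕ × ℕ × ℕ → Set Ω := fun i =>
    {ω | i.2.2 < 2^(i.2.1+1) ∧
      myThr h i.1 i.2.1 ≤ |X ω (p i.1 i.2.1 (i.2.2+1)) - X ω (p i.1 i.2.1 i.2.2)|} with hAdef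
  have hPB : ∀ N k j : ℕ, P (A (N,k,j)) ≤ if j < 2^(k+1) then
      ENNReal.ofReal (3 * Real.exp (-(2*Real.log 2*((k:ℝ)+2) + 2*Real.log ((N:ℝ)+2)))) else 0 := by
    intro N k j
    by_cases hj : j < 2^(k+1)
    · rw [if_pos hj]
      have hsub : A (N,k,j) ⊆ {ω | myThr h N k ≤ |X ω (p N k (j+1)) - X ω (p N k j)|} :=
        fun ω hw => hw.2
      refine le_trans (measure_mono hsub) ?_
      refine le_trans (my_incr_tail P h X hh0 hmeas hgauss (p N k j) (p N k (j+1))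
        (hp0 _ _ _) (hp0 _ _ _) (myThr h N k) (myThr_pos h N k)) (le_of_eq ?_)
      have hdiff : p N k (j+1) - p N k j = 1/2^k := by
        simp only [hpdef]; push_cast; ring
      rw [hdiff, abs_of_pos (by positivity : (0:ℝ) < 1/2^k)]
      congr 1
      congr 1
      congr 1
      rw [myThr_sq]
      have ha : (0:ℝ) < ((1:ℝ)/2^k)^(2*h) := Real.rpow_pos_of_pos (by positivity) _
      field_simp
      ring
    · rw [if_neg hj]
      calc P (A (N,k,j)) ≤ P ∅ := measure_mono (fun ω hw => absurd hw.1 hj)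
        _ = 0 := measure_empty
  have hfin := MeasureTheory.ae_finite_setOf_mem (my_tail_sum P A hPB)
  filter_upwards [hfin] with ω hω
  classical
  set F := hω.toFinset with hF
  set Cw : ℝ := 1 + ∑ i ∈ F,
    |X ω (p i.1 i.2.1 (i.2.2+1)) - X ω (p i.1 i.2.1 i.2.2)| / myThr h i.1 i.2.1 with hCw
  have hsum0 : (0:ℝ) ≤ ∑ i ∈ F,
      |X ω (p i.1 i.2.1 (i.2.2+1)) - X ω (p i.1 i.2.1 i.2.2)| / myThr h i.1 i.2.1 :=
    Finset.sum_nonneg (fun i _ => div_nonneg (abs_nonneg _) (myThr_pos h _ _).le)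
  have hC1 : 1 ≤ Cw := by rw [hCw]; linarith
  have hCw0 : (0:ℝ) ≤ Cw := by linarith
  have hCb : ∀ N k j : ℕ, j < 2^(k+1) →
      |X ω (p N k (j+1)) - X ω (p N k j)| ≤ Cw * myThr h N k := by
    intro N k j hj
    have hthr := myThr_pos h N k
    by_cases hbad : ω ∈ A (N,k,j)
    · have hiF : (N,k,j) ∈ F := by rw [hF, Set.Finite.mem_toFinset]; exact hbad
      have h1 : |X ω (p N k (j+1)) - X ω (p N k j)| / myThr h N k
          ≤ ∑ i ∈ F, |X ω (p i.1 i.2.1 (i.2.2+1)) - X ω (p i.1 i.2.1 i.2.2)| / myThr h i.1 i.2.1 :=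
        Finset.single_le_sum (f := fun i : ℕ×ℕ×ℕ =>
          |X ω (p i.1 i.2.1 (i.2.2+1)) - X ω (p i.1 i.2.1 i.2.2)| / myThr h i.1 i.2.1)
          (fun i _ => div_nonneg (abs_nonneg _) (myThr_pos h _ _).le) hiF
      calc |X ω (p N k (j+1)) - X ω (p N k j)|
          = (|X ω (p N k (j+1)) - X ω (p N k j)| / myThr h N k) * myThr h N k :=
            (div_mul_cancel₀ _ (ne_of_gt hthr)).symm
        _ ≤ Cw * myThr h N k := by
            apply mul_le_mul_of_nonneg_right _ hthr.le
            rw [hCw]; linarith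
    · have hne : ¬ (j < 2^(k+1) ∧
          myThr h N k ≤ |X ω (p N k (j+1)) - X ω (p N k j)|) := hbad
      push_neg at hne
      have hlt := hne hj
      calc |X ω (p N k (j+1)) - X ω (p N k j)| ≤ myThr h N k := hlt.le
        _ ≤ Cw * myThr h N k := le_mul_of_one_le_left hthr.le hC1
  have hthr_sum : ∀ N : ℕ, Summable (fun k => myThr h N k) := by
    intro N
    have hc : (0:ℝ) ≤ 8*Real.log ((N:ℝ)+2) := by
      have := Real.log_nonneg (by push_cast; linarith [Nat.cast_nonneg (α := ℝ) N] :
        (1:ℝ) ≤ (N:ℝ)+2)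
      linarith
    exact (my_summable_thr r hr0.le hr1 (8*Real.log ((N:ℝ)+2)) hc).congr
      (fun k => (myThr_eq h N k).symm)
  have hosc : ∀ N : ℕ, ∀ t ∈ Icc ((N:ℝ)) ((N:ℝ)+2),
      |X ω t - X ω N| ≤ 2 * (Cw * ∑' k, myThr h N k) := by
    intro N t ht
    have hIcc : Icc ((N:ℝ)) ((N:ℝ)+2) ⊆ Ici 0 := fun z hz => by
      have : (0:ℝ) ≤ (N:ℝ) := Nat.cast_nonneg N
      simp only [mem_Ici]; linarith [hz.1]
    have hchain := my_chain (X ω) (N:ℝ) ((hcont ω).mono hIcc)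
      (fun k => Cw * myThr h N k)
      (fun k => mul_nonneg hCw0 (myThr_pos h N k).le)
      ((hthr_sum N).mul_left Cw)
      (fun k j hj => by
        have hb := hCb N k j hj
        have e1 : p N k (j+1) = (N:ℝ) + ((j:ℝ)+1)/2^k := by
          simp only [hpdef]; push_cast; ring
        have e2 : p N k j = (N:ℝ) + (j:ℝ)/2^k := rfl
        rw [e1, e2] at hb
        exact hb) t ht
    calc |X ω t - X ω (N:ℝ)| ≤ 2 * ∑' k, Cw * myThr h N k := hchain
      _ = 2 * (Cw * ∑' k, myThr h N k) := by rw [tsum_mul_left]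
  set K1 : ℝ := ∑' k : ℕ, r^k * Real.sqrt (8*Real.log 2*((k:ℝ)+2)) with hK1
  have hK1nn : 0 ≤ K1 := tsum_nonneg fun k => by positivity
  set K2 : ℝ := Real.sqrt 8 * (1-r)⁻¹ with hK2
  have hK2nn : 0 ≤ K2 := mul_nonneg (Real.sqrt_nonneg _) (inv_nonneg.2 (by linarith))
  have htsum_le : ∀ N : ℕ, ∑' k, myThr h N k
      ≤ K1 + K2 * Real.sqrt (Real.log ((N:ℝ)+2)) := by
    intro N
    have hc : (0:ℝ) ≤ 8*Real.log ((N:ℝ)+2) := by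
      have := Real.log_nonneg (by push_cast; linarith [Nat.cast_nonneg (α := ℝ) N] :
        (1:ℝ) ≤ (N:ℝ)+2)
      linarith
    have hle := my_tsum_thr_le r hr0.le hr1 (8*Real.log ((N:ℝ)+2)) hc
    have he : ∑' k, myThr h N k
        = ∑' k : ℕ, r^k * Real.sqrt (8*Real.log 2*((k:ℝ)+2) + 8*Real.log ((N:ℝ)+2)) :=
      tsum_congr (fun k => myThr_eq h N k)
    rw [he]
    refine le_trans hle ?_
    rw [show (8:ℝ)*Real.log ((N:ℝ)+2) = 8 * Real.log ((N:ℝ)+2) from rfl,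
      Real.sqrt_mul (by norm_num : (0:ℝ) ≤ 8)]
    have : Real.sqrt 8 * Real.sqrt (Real.log ((N:ℝ)+2)) * (1-r)⁻¹
        = K2 * Real.sqrt (Real.log ((N:ℝ)+2)) := by rw [hK2]; ring
    rw [this]
  set D : ℝ := 4 * Cw * (K1 + Real.sqrt 2 * K2) with hD
  have main : ∀ t ≥ Real.exp 2, ∀ s1 s2 : ℝ,
      s1 ∈ Icc ((⌊t⌋₊:ℝ)) ((⌊t⌋₊:ℝ)+2) → s2 ∈ Icc ((⌊t⌋₊:ℝ)) ((⌊t⌋₊:ℝ)+2) →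
      |X ω s1 - X ω s2| ≤ D * Real.sqrt (Real.log t) := by
    intro t ht s1 s2 hs1 hs2
    have hexp2 : (3:ℝ) ≤ Real.exp 2 := by
      have := Real.add_one_le_exp (2:ℝ); linarith
    have ht2 : (2:ℝ) ≤ t := by linarith
    have ht0 : (0:ℝ) < t := by linarith
    have hNt : ((⌊t⌋₊:ℕ):ℝ) ≤ t := Nat.floor_le ht0.le
    have hlogt1 : 1 ≤ Real.log t := by
      have h1 : Real.log (Real.exp 2) ≤ Real.log t := Real.log_le_log (Real.exp_pos 2) ht
      rw [Real.log_exp] at h1; linarith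
    have hsq1 : 1 ≤ Real.sqrt (Real.log t) := by
      rw [show (1:ℝ) = Real.sqrt 1 from (Real.sqrt_one).symm]
      exact Real.sqrt_le_sqrt hlogt1
    have hlogN2 : Real.log (((⌊t⌋₊:ℕ):ℝ)+2) ≤ 2 * Real.log t := by
      have h1 : ((⌊t⌋₊:ℕ):ℝ)+2 ≤ t^2 := by nlinarith
      calc Real.log (((⌊t⌋₊:ℕ):ℝ)+2) ≤ Real.log (t^2) := by
            apply Real.log_le_log _ h1
            have : (0:ℝ) ≤ ((⌊t⌋₊:ℕ):ℝ) := Nat.cast_nonneg _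
            linarith
        _ = 2 * Real.log t := by rw [Real.log_pow]; norm_num
    have hsqN : Real.sqrt (Real.log (((⌊t⌋₊:ℕ):ℝ)+2))
        ≤ Real.sqrt 2 * Real.sqrt (Real.log t) := by
      rw [← Real.sqrt_mul (by norm_num : (0:ℝ) ≤ 2)]
      exact Real.sqrt_le_sqrt hlogN2
    have h1 := hosc ⌊t⌋₊ s1 hs1
    have h2 := hosc ⌊t⌋₊ s2 hs2
    have hts := htsum_le ⌊t⌋₊
    have htsum0 : 0 ≤ ∑' k, myThr h ⌊t⌋₊ k := tsum_nonneg fun k => (myThr_pos h _ _).le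
    have hsqrtN0 : 0 ≤ Real.sqrt (Real.log (((⌊t⌋₊:ℕ):ℝ)+2)) := Real.sqrt_nonneg _
    have habs : |X ω s1 - X ω s2|
        ≤ |X ω s1 - X ω ((⌊t⌋₊:ℕ):ℝ)| + |X ω s2 - X ω ((⌊t⌋₊:ℕ):ℝ)| := by
      have := abs_sub_le (X ω s1) (X ω ((⌊t⌋₊:ℕ):ℝ)) (X ω s2)
      rw [abs_sub_comm (X ω ((⌊t⌋₊:ℕ):ℝ)) (X ω s2)] at this
      exact this
    have hstep : |X ω s1 - X ω s2| ≤ 4 * Cw * (∑' k, myThr h ⌊t⌋₊ k) := by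
      have e : 4 * Cw * (∑' k, myThr h ⌊t⌋₊ k)
          = 2 * (Cw * ∑' k, myThr h ⌊t⌋₊ k) + 2 * (Cw * ∑' k, myThr h ⌊t⌋₊ k) := by ring
      rw [e]
      linarith
    calc |X ω s1 - X ω s2| ≤ 4 * Cw * (∑' k, myThr h ⌊t⌋₊ k) := hstep
      _ ≤ 4 * Cw * (K1 + K2 * Real.sqrt (Real.log (((⌊t⌋₊:ℕ):ℝ)+2))) := by
          apply mul_le_mul_of_nonneg_left hts (by linarith)
      _ ≤ 4 * Cw * ((K1 + Real.sqrt 2 * K2) * Real.sqrt (Real.log t)) := by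
          apply mul_le_mul_of_nonneg_left _ (by linarith)
          have hK2b : K2 * Real.sqrt (Real.log (((⌊t⌋₊:ℕ):ℝ)+2))
              ≤ K2 * (Real.sqrt 2 * Real.sqrt (Real.log t)) :=
            mul_le_mul_of_nonneg_left hsqN hK2nn
          have hK1b : K1 ≤ K1 * Real.sqrt (Real.log t) := by
            nlinarith
          nlinarith [Real.sqrt_nonneg (Real.log t)]
      _ = D * Real.sqrt (Real.log t) := by rw [hD]; ring
  constructor
  · refine ⟨D, Real.exp 2, fun t ht => ?_⟩
    have hexp2 : (3:ℝ) ≤ Real.exp 2 := by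
      have := Real.add_one_le_exp (2:ℝ); linarith
    have ht0 : (0:ℝ) < t := by linarith
    have hNt : ((⌊t⌋₊:ℕ):ℝ) ≤ t := Nat.floor_le ht0.le
    have hNt2 : t < ((⌊t⌋₊:ℕ):ℝ) + 1 := Nat.lt_floor_add_one t
    exact main t ht (t+1) t ⟨by linarith, by linarith⟩ ⟨by linarith, by linarith⟩
  · refine ⟨D, Real.exp 2, fun t ht => ?_⟩
    have hexp2 : (3:ℝ) ≤ Real.exp 2 := by
      have := Real.add_one_le_exp (2:ℝ); linarith
    have ht0 : (0:ℝ) < t := by linarith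
    have hNt : ((⌊t⌋₊:ℕ):ℝ) ≤ t := Nat.floor_le ht0.le
    have hNt2 : t < ((⌊t⌋₊:ℕ):ℝ) + 1 := Nat.lt_floor_add_one t
    have huIcc : Set.uIcc t (t+1) = Icc t (t+1) := Set.uIcc_of_le (by linarith)
    have hsub : Set.uIcc t (t+1) ⊆ Ici 0 := by
      rw [huIcc]; intro z hz; simp only [mem_Ici]; linarith [hz.1]
    have hint : IntervalIntegrable (X ω) MeasureTheory.volume t (t+1) :=
      ((hcont ω).mono hsub).intervalIntegrable
    have heq : X ω t - ∫ s in t..(t+1), X ω s = ∫ s in t..(t+1), (X ω t - X ω s) := by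
      rw [intervalIntegral.integral_sub intervalIntegrable_const hint,
        intervalIntegral.integral_const]
      norm_num
    rw [heq]
    have hb := intervalIntegral.norm_integral_le_of_norm_le_const
      (C := D * Real.sqrt (Real.log t)) (f := fun s => X ω t - X ω s)
      (a := t) (b := t+1) ?_
    · rw [Real.norm_eq_abs] at hb
      calc |∫ s in t..(t+1), (X ω t - X ω s)| ≤ D * Real.sqrt (Real.log t) * |t+1-t| := hb
        _ = D * Real.sqrt (Real.log t) := by norm_num
    · intro s hs
      rw [Set.uIoc_of_le (by linarith : t ≤ t+1)] at hs
      rw [Real.norm_eq_abs]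
      exact main t ht t s ⟨by linarith, by linarith⟩
        ⟨by linarith [hs.1], by linarith [hs.2]⟩
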